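/- Consider the controlled inverted pendulum equation φ̈ = u(φ, φ̇)·sin φ − cos φ + v(φ, φ̇), where u, v : ℝ² → ℝ are smooth and the equation defines a continuous flow on ℝ² (in coordinates (φ, φ̇)). Assume |v(0,0)| < 1 and |v(π,0)| < 1, and assume (φ, φ̇) = (π/2, 0) is a Lyapunov stable equilibrium of the flow. Then (π/2, 0) is not globally attractive: there exists a solution φ(t) defined for all t ≥ 0 such that 0 < φ(t) < π for all t ≥ 0 and (φ(t), φ̇(t)) does not converge to (π/2, 0) as t → ∞. -/

import Mathlib

open Filter Topology Set Metric

lemma aux_right_lt {f : ℝ → ℝ} {y T : ℝ} (hf : HasDerivAt f y T) (hy : y < 0) :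
    ∀ᶠ t in 𝓝[>] T, f t < f T := by
  have hs : Filter.Tendsto (slope f T) (𝓝[≠] T) (𝓝 y) := hasDerivAt_iff_tendsto_slope.mp hf
  have h1 : ∀ᶠ t in 𝓝[≠] T, slope f T t < 0 := hs.eventually_lt_const hy
  have h2 : ∀ᶠ t in 𝓝[>] T, slope f T t < 0 :=
    h1.filter_mono (nhdsWithin_mono T (fun x hx => ne_of_gt hx))
  filter_upwards [h2, self_mem_nhdsWithin] with t ht hTt
  rw [slope_def_field] at ht
  have hpos : (0:ℝ) < t - T := sub_pos.mpr hTt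
  by_contra hcon
  push_neg at hcon
  exact absurd (div_nonneg (by linarith) hpos.le) (not_le.mpr ht)

lemma aux_right_gt {f : ℝ → ℝ} {y T : ℝ} (hf : HasDerivAt f y T) (hy : 0 < y) :
    ∀ᶠ t in 𝓝[>] T, f T < f t := by
  have := aux_right_lt hf.neg (by linarith : -y < 0)
  filter_upwards [this] with t ht
  simpa using ht

lemma aux_left_lt {f : ℝ → ℝ} {y T : ℝ} (hf : HasDerivAt f y T) (hy : 0 < y) :
    ∀ᶠ t in 𝓝[<] T, f t < f T := by
  have hs : Filter.Tendsto (slope f T) (𝓝[≠] T) (𝓝 y) := hasDerivAt_iff_tendsto_slope.mp hf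
  have h1 : ∀ᶠ t in 𝓝[≠] T, 0 < slope f T t := hs.eventually_const_lt hy
  have h2 : ∀ᶠ t in 𝓝[<] T, 0 < slope f T t :=
    h1.filter_mono (nhdsWithin_mono T (fun x hx => ne_of_lt hx))
  filter_upwards [h2, self_mem_nhdsWithin] with t ht hTt
  rw [slope_def_field] at ht
  have hneg : t - T < 0 := sub_neg.mpr hTt
  by_contra hcon
  push_neg at hcon
  have : (f t - f T) / (t - T) ≤ 0 := div_nonpos_of_nonneg_of_nonpos (by linarith) hneg.le
  linarith

lemma aux_left_gt {f : ℝ → ℝ} {y T : ℝ} (hf : HasDerivAt f y T) (hy : y < 0) :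
    ∀ᶠ t in 𝓝[<] T, f T < f t := by
  have := aux_left_lt hf.neg (by linarith : 0 < -y)
  filter_upwards [this] with t ht
  simpa using ht

lemma aux2_right_lt {f g : ℝ → ℝ} {a T : ℝ} (hf : ∀ t, HasDerivAt f (g t) t)
    (hgT : g T = 0) (hg : HasDerivAt g a T) (ha : a < 0) :
    ∀ᶠ t in 𝓝[>] T, f t < f T := by
  have h1 : ∀ᶠ t in 𝓝[>] T, g t < 0 := by
    have := aux_right_lt hg ha
    simpa [hgT] using this
  obtain ⟨w, hwT, hw⟩ := mem_nhdsGT_iff_exists_Ioc_subset.mp h1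
  have hanti : StrictAntiOn f (Icc T w) := by
    apply strictAntiOn_of_deriv_neg (convex_Icc T w)
    · exact (continuous_iff_continuousAt.mpr fun x => (hf x).continuousAt).continuousOn
    · intro x hx
      rw [interior_Icc] at hx
      rw [(hf x).deriv]
      exact hw ⟨hx.1, hx.2.le⟩
  have hmem : Ioc T w ∈ 𝓝[>] T := Ioc_mem_nhdsGT_of_mem ⟨le_refl T, hwT⟩
  filter_upwards [hmem] with t ht
  exact hanti (left_mem_Icc.mpr (le_of_lt hwT)) ⟨ht.1.le, ht.2⟩ ht.1

lemma aux2_right_gt {f g : ℝ → ℝ} {a T : ℝ} (hf : ∀ t, HasDerivAt f (g t) t)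
    (hgT : g T = 0) (hg : HasDerivAt g a T) (ha : 0 < a) :
    ∀ᶠ t in 𝓝[>] T, f T < f t := by
  have := aux2_right_lt (f := fun t => -f t) (g := fun t => -g t)
    (fun t => (hf t).neg) (by simp [hgT]) hg.neg (by linarith : -a < 0)
  filter_upwards [this] with t ht
  simpa using ht

lemma tube_helper {W : Set ((ℝ × ℝ) × ℝ)} (hW : IsOpen W) (p : ℝ × ℝ) {a b : ℝ}
    (h : ∀ s ∈ Set.Icc a b, (p, s) ∈ W) :
    ∃ N : Set (ℝ × ℝ), IsOpen N ∧ p ∈ N ∧ ∀ q ∈ N, ∀ s ∈ Set.Icc a b, (q, s) ∈ W := by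
  obtain ⟨U, V, hU, _, hpU, hIV, hUV⟩ :=
    generalized_tube_lemma isCompact_singleton isCompact_Icc hW
      (by
        rintro ⟨x, s⟩ ⟨hx, hs⟩
        rw [Set.mem_singleton_iff] at hx
        subst hx
        exact h s hs)
  exact ⟨U, hU, hpU rfl, fun q hq s hs => hUV ⟨hq, hIV hs⟩⟩

theorem inverted_pendulum_not_globally_attractive
    (u v : ℝ × ℝ → ℝ)
    (hu : ContDiff ℝ (⊤ : ℕ∞) u) (hv : ContDiff ℝ (⊤ : ℕ∞) v)
    (F : ℝ × ℝ → ℝ → ℝ × ℝ)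
    (hFcont : Continuous fun q : (ℝ × ℝ) × ℝ => F q.1 q.2)
    (hF0 : ∀ p, F p 0 = p)
    (hFadd : ∀ p t s, F p (t + s) = F (F p t) s)
    (hode1 : ∀ p t, HasDerivAt (fun s => (F p s).1) ((F p t).2) t)
    (hode2 : ∀ p t, HasDerivAt (fun s => (F p s).2)
      (u (F p t) * Real.sin (F p t).1 - Real.cos (F p t).1 + v (F p t)) t)
    (hv0 : |v (0, 0)| < 1) (hvπ : |v (Real.pi, 0)| < 1)
    (hequil : ∀ t : ℝ, F (Real.pi / 2, 0) t = (Real.pi / 2, 0))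
    (hstab : ∀ O : Set (ℝ × ℝ), IsOpen O → (Real.pi / 2, (0 : ℝ)) ∈ O →
      ∃ V : Set (ℝ × ℝ), IsOpen V ∧ (Real.pi / 2, (0 : ℝ)) ∈ V ∧
        ∀ p ∈ V, ∀ t ≥ (0 : ℝ), F p t ∈ O) :
    ∃ p : ℝ × ℝ, (∀ t ≥ (0 : ℝ), 0 < (F p t).1 ∧ (F p t).1 < Real.pi) ∧
      ¬ Filter.Tendsto (fun t => F p t) Filter.atTop (nhds (Real.pi / 2, (0 : ℝ))) := by
  have hπ3 : (3:ℝ) < Real.pi := Real.pi_gt_three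
  -- continuity helpers
  have hcont1 : ∀ t : ℝ, Continuous fun q : ℝ × ℝ => F q t :=
    fun t => hFcont.comp (continuous_id.prodMk continuous_const)
  have hcont2 : ∀ p : ℝ × ℝ, Continuous fun t => F p t :=
    fun p => hFcont.comp (continuous_const.prodMk continuous_id)
  have hWlt : ∀ r : ℝ, IsOpen {qt : (ℝ × ℝ) × ℝ | (F qt.1 qt.2).1 < r} :=
    fun r => isOpen_lt hFcont.fst continuous_const
  have hWgt : ∀ r : ℝ, IsOpen {qt : (ℝ × ℝ) × ℝ | r < (F qt.1 qt.2).1} :=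
    fun r => isOpen_lt continuous_const hFcont.fst
  -- the two "exit" sets
  set A : Set (ℝ × ℝ) :=
    {p | ∃ t, 0 ≤ t ∧ (F p t).1 < 0 ∧ ∀ s ∈ Set.Icc 0 t, (F p s).1 < Real.pi} with hA_def
  set B : Set (ℝ × ℝ) :=
    {p | ∃ t, 0 ≤ t ∧ Real.pi < (F p t).1 ∧ ∀ s ∈ Set.Icc 0 t, 0 < (F p s).1} with hB_def
  have hAopen : IsOpen A := by
    rw [isOpen_iff_forall_mem_open]
    rintro p ⟨t, ht0, htneg, htπ⟩
    obtain ⟨N, hNopen, hpN, hN⟩ := tube_helper (hWlt Real.pi) p (fun s hs => htπ s hs)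
    refine ⟨N ∩ {q | (F q t).1 < 0}, ?_, hNopen.inter (isOpen_lt (hcont1 t).fst continuous_const),
      hpN, htneg⟩
    rintro q ⟨hq1, hq2⟩
    exact ⟨t, ht0, hq2, fun s hs => hN q hq1 s hs⟩
  have hBopen : IsOpen B := by
    rw [isOpen_iff_forall_mem_open]
    rintro p ⟨t, ht0, htpos, ht0'⟩
    obtain ⟨N, hNopen, hpN, hN⟩ := tube_helper (hWgt 0) p (fun s hs => ht0' s hs)
    refine ⟨N ∩ {q | Real.pi < (F q t).1}, ?_, hNopen.inter (isOpen_lt continuous_const (hcont1 t).fst),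
      hpN, htpos⟩
    rintro q ⟨hq1, hq2⟩
    exact ⟨t, ht0, hq2, fun s hs => hN q hq1 s hs⟩
  have hABdisj : ∀ p, p ∈ A → p ∈ B → False := by
    rintro p ⟨t₁, ht₁0, h1, h1'⟩ ⟨t₂, ht₂0, h2, h2'⟩
    rcases le_total t₁ t₂ with h | h
    · have := h2' t₁ ⟨ht₁0, h⟩; linarith
    · have := h1' t₂ ⟨ht₂0, h⟩; linarith
  -- local exit behaviour at (0,0) and (π,0)
  have exit_left : ∀ᶠ s in 𝓝[>] (0:ℝ), (F ((0:ℝ), (0:ℝ)) s).1 < 0 := by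
    have hacc := hode2 ((0:ℝ), (0:ℝ)) 0
    rw [hF0] at hacc
    simp only [Real.sin_zero, Real.cos_zero, mul_zero, zero_sub] at hacc
    have hg0 : (F ((0:ℝ), (0:ℝ)) 0).2 = 0 := by rw [hF0]
    have := aux2_right_lt (fun t => hode1 ((0:ℝ), (0:ℝ)) t) hg0 hacc
      (by have := abs_lt.mp hv0; linarith)
    have hf0 : (F ((0:ℝ), (0:ℝ)) 0).1 = 0 := by rw [hF0]
    filter_upwards [this] with t ht
    rwa [hf0] at ht
  have exit_right : ∀ᶠ s in 𝓝[>] (0:ℝ), Real.pi < (F (Real.pi, (0:ℝ)) s).1 := by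
    have hacc := hode2 (Real.pi, (0:ℝ)) 0
    rw [hF0] at hacc
    simp only [Real.sin_pi, Real.cos_pi, mul_zero, zero_sub] at hacc
    have hg0 : (F (Real.pi, (0:ℝ)) 0).2 = 0 := by rw [hF0]
    have := aux2_right_gt (fun t => hode1 (Real.pi, (0:ℝ)) t) hg0 hacc
      (by have := abs_lt.mp hvπ; linarith)
    have hf0 : (F (Real.pi, (0:ℝ)) 0).1 = Real.pi := by rw [hF0]
    filter_upwards [this] with t ht
    rwa [hf0] at ht
  -- (0,0) ∈ A
  have h0A : ((0:ℝ), (0:ℝ)) ∈ A := by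
    obtain ⟨w, hw, hsub⟩ := mem_nhdsGT_iff_exists_Ioc_subset.mp exit_left
    have hev : ∀ᶠ s in 𝓝 (0:ℝ), (F ((0:ℝ), (0:ℝ)) s).1 < Real.pi := by
      apply ((hcont2 ((0:ℝ), (0:ℝ))).fst.continuousAt).eventually_lt_const
      show (F ((0:ℝ), (0:ℝ)) 0).1 < Real.pi
      rw [hF0]; simpa using Real.pi_pos
    obtain ⟨ε, hε, hball⟩ := Metric.eventually_nhds_iff.mp hev
    set t := min w (ε/2) with ht_def
    have htpos : 0 < t := lt_min hw (by linarith)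
    refine ⟨t, htpos.le, hsub ⟨htpos, min_le_left _ _⟩, ?_⟩
    intro s hs
    apply hball
    rw [Real.dist_eq, sub_zero, abs_of_nonneg hs.1]
    calc s ≤ t := hs.2
      _ ≤ ε/2 := min_le_right _ _
      _ < ε := by linarith
  -- (π,0) ∈ B
  have hπB : ((Real.pi : ℝ), (0:ℝ)) ∈ B := by
    obtain ⟨w, hw, hsub⟩ := mem_nhdsGT_iff_exists_Ioc_subset.mp exit_right
    have hev : ∀ᶠ s in 𝓝 (0:ℝ), 0 < (F (Real.pi, (0:ℝ)) s).1 := by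
      apply ((hcont2 (Real.pi, (0:ℝ))).fst.continuousAt).eventually_const_lt
      show 0 < (F (Real.pi, (0:ℝ)) 0).1
      rw [hF0]; simpa using Real.pi_pos
    obtain ⟨ε, hε, hball⟩ := Metric.eventually_nhds_iff.mp hev
    set t := min w (ε/2) with ht_def
    have htpos : 0 < t := lt_min hw (by linarith)
    refine ⟨t, htpos.le, hsub ⟨htpos, min_le_left _ _⟩, ?_⟩
    intro s hs
    apply hball
    rw [Real.dist_eq, sub_zero, abs_of_nonneg hs.1]
    calc s ≤ t := hs.2
      _ ≤ ε/2 := min_le_right _ _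
      _ < ε := by linarith
  -- the supremum construction
  set E : Set ℝ := {x | x ∈ Set.Icc 0 Real.pi ∧ ((x, (0:ℝ)) : ℝ × ℝ) ∈ A} with hE_def
  have hE0 : (0:ℝ) ∈ E := ⟨⟨le_rfl, Real.pi_pos.le⟩, h0A⟩
  have hEne : E.Nonempty := ⟨0, hE0⟩
  have hEbdd : BddAbove E := ⟨Real.pi, fun x hx => hx.1.2⟩
  set x₀ := sSup E with hx₀_def
  have hx₀0 : 0 ≤ x₀ := le_csSup hEbdd hE0
  have hx₀π : x₀ ≤ Real.pi := csSup_le hEne fun x hx => hx.1.2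
  have hclose : ∀ N : Set (ℝ × ℝ), IsOpen N → ((x₀, (0:ℝ)) : ℝ × ℝ) ∈ N →
      ∃ x ∈ E, ((x, (0:ℝ)) : ℝ × ℝ) ∈ N := by
    intro N hN hmem
    obtain ⟨ε, hε, hball⟩ := Metric.isOpen_iff.mp hN _ hmem
    obtain ⟨x, hxE, hx⟩ := exists_lt_of_lt_csSup hEne (show x₀ - ε < x₀ by linarith)
    have hxle : x ≤ x₀ := le_csSup hEbdd hxE
    refine ⟨x, hxE, hball ?_⟩
    simp only [Metric.mem_ball, Prod.dist_eq, Real.dist_eq, sub_self, abs_zero]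
    rw [max_lt_iff]
    constructor
    · rw [abs_lt]; constructor <;> linarith
    · exact hε
  have hx₀A : ((x₀, (0:ℝ)) : ℝ × ℝ) ∉ A := by
    intro hmem
    have hx₀ltπ : x₀ < Real.pi :=
      lt_of_le_of_ne hx₀π (by intro h; rw [h] at hmem; exact hABdisj _ hmem hπB)
    obtain ⟨ε, hε, hball⟩ := Metric.isOpen_iff.mp hAopen _ hmem
    set x' := min (x₀ + ε / 2) Real.pi with hx'_def
    have hlt : x₀ < x' := lt_min (by linarith) hx₀ltπ
    have hx'A : ((x', (0:ℝ)) : ℝ × ℝ) ∈ A := by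
      apply hball
      simp only [Metric.mem_ball, Prod.dist_eq, Real.dist_eq, sub_self, abs_zero]
      rw [max_lt_iff]
      have : x' ≤ x₀ + ε / 2 := min_le_left _ _
      constructor
      · rw [abs_lt]; constructor <;> linarith
      · exact hε
    have hx'E : x' ∈ E := ⟨⟨by linarith, min_le_right _ _⟩, hx'A⟩
    have := le_csSup hEbdd hx'E
    linarith
  have hx₀B : ((x₀, (0:ℝ)) : ℝ × ℝ) ∉ B := by
    intro hmem
    obtain ⟨x, hxE, hxB⟩ := hclose B hBopen hmem
    exact hABdisj _ hxE.2 hxB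
  have hx₀pos : 0 < x₀ :=
    hx₀0.lt_of_ne fun h => hx₀A (by rw [← h]; exact h0A)
  have hx₀ltπ : x₀ < Real.pi :=
    lt_of_le_of_ne hx₀π fun h => hx₀B (by rw [h]; exact hπB)
  set p : ℝ × ℝ := (x₀, (0:ℝ)) with hp_def
  have hφc : Continuous fun t => (F p t).1 := (hcont2 p).fst
  have hstay : ∀ t ≥ (0:ℝ), 0 < (F p t).1 ∧ (F p t).1 < Real.pi := by
    by_contra hcon
    push_neg at hcon
    obtain ⟨t₀, ht₀, hbad⟩ := hcon
    set S : Set ℝ := {t | 0 ≤ t ∧ ((F p t).1 ≤ 0 ∨ Real.pi ≤ (F p t).1)} with hS_def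
    have hSne : S.Nonempty := by
      refine ⟨t₀, ht₀, ?_⟩
      rcases le_or_gt (F p t₀).1 0 with h | h
      · exact Or.inl h
      · exact Or.inr (hbad h)
    have hScl : IsClosed S := by
      have hSeq : S = {t : ℝ | 0 ≤ t} ∩ ({t | (F p t).1 ≤ 0} ∪ {t | Real.pi ≤ (F p t).1}) := by
        ext t
        simp only [hS_def, Set.mem_setOf_eq, Set.mem_inter_iff, Set.mem_union]
      rw [hSeq]
      exact (isClosed_le continuous_const continuous_id).inter
        ((isClosed_le hφc continuous_const).union (isClosed_le continuous_const hφc))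
    have hSbdd : BddBelow S := ⟨0, fun x hx => hx.1⟩
    set T := sInf S with hT_def
    have hTS : T ∈ S := hScl.csInf_mem hSne hSbdd
    have hT0 : 0 ≤ T := hTS.1
    have hφ0 : (F p 0).1 = x₀ := by rw [hF0]
    have hTpos : 0 < T := by
      rcases hT0.lt_or_eq with h | h
      · exact h
      · exfalso; rw [← h] at hTS
        rcases hTS.2 with h' | h' <;> rw [hφ0] at h' <;> linarith
    have hpre : ∀ s, 0 ≤ s → s < T → 0 < (F p s).1 ∧ (F p s).1 < Real.pi := by
      intro s hs0 hsT
      by_contra h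
      push_neg at h
      have hsS : s ∈ S := by
        refine ⟨hs0, ?_⟩
        rcases le_or_gt (F p s).1 0 with h' | h'
        · exact Or.inl h'
        · exact Or.inr (h h')
      exact absurd (csInf_le hSbdd hsS) (not_le.mpr hsT)
    have hmemIoo : Set.Ioo 0 T ∈ 𝓝[<] T := Ioo_mem_nhdsLT_of_mem ⟨hTpos, le_rfl⟩
    have hmemIoo' : ∀ᶠ t in 𝓝[<] T, t ∈ Set.Ioo 0 T := by
      filter_upwards [hmemIoo] with t ht; exact ht
    have hleft : Filter.Tendsto (fun t => (F p t).1) (𝓝[<] T) (𝓝 ((F p T).1)) :=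
      hφc.continuousAt.tendsto.mono_left nhdsWithin_le_nhds
    have hTlo : 0 ≤ (F p T).1 := by
      apply ge_of_tendsto hleft
      filter_upwards [hmemIoo'] with s hs
      exact (hpre s hs.1.le hs.2).1.le
    have hThi : (F p T).1 ≤ Real.pi := by
      apply le_of_tendsto hleft
      filter_upwards [hmemIoo'] with s hs
      exact (hpre s hs.1.le hs.2).2.le
    rcases hTS.2 with hT0' | hTπ'
    · -- the trajectory reaches φ = 0 at time T, then exits left: p ∈ A, contradiction
      have hφT : (F p T).1 = 0 := le_antisymm hT0' hTlo
      have hevneg : ∀ᶠ t in 𝓝[>] T, (F p t).1 < 0 := by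
        rcases lt_trichotomy ((F p T).2) 0 with hy | hy | hy
        · have := aux_right_lt (hode1 p T) hy
          filter_upwards [this] with t ht; rwa [hφT] at ht
        · have hpt : F p T = ((0:ℝ), (0:ℝ)) := Prod.ext hφT hy
          obtain ⟨w, hw, hsub⟩ := mem_nhdsGT_iff_exists_Ioc_subset.mp exit_left
          have hw' : 0 < w := hw
          apply mem_nhdsGT_iff_exists_Ioc_subset.mpr
          refine ⟨T + w, by simp only [Set.mem_Ioi]; linarith, ?_⟩
          intro t ht
          show (F p t).1 < 0
          have h1 := hFadd p T (t - T)
          rw [hpt, show T + (t - T) = t by ring] at h1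
          rw [h1]
          exact hsub ⟨sub_pos.mpr ht.1, by linarith [ht.2]⟩
        · exfalso
          have hl := aux_left_lt (hode1 p T) hy
          obtain ⟨t, ht1, ht2⟩ := (hl.and hmemIoo').exists
          have := (hpre t ht2.1.le ht2.2).1
          rw [hφT] at ht1
          linarith
      obtain ⟨w, hw, hsub⟩ := mem_nhdsGT_iff_exists_Ioc_subset.mp hevneg
      have hw' : T < w := hw
      have hev : ∀ᶠ s in 𝓝 T, (F p s).1 < Real.pi := by
        apply hφc.continuousAt.eventually_lt_const
        show (F p T).1 < Real.pi
        rw [hφT]; exact Real.pi_pos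
      obtain ⟨ε, hε, hball⟩ := Metric.eventually_nhds_iff.mp hev
      set t' := min w (T + ε / 2) with ht'_def
      have hTt' : T < t' := lt_min hw' (by linarith)
      apply hx₀A
      refine ⟨t', by linarith, hsub ⟨hTt', min_le_left _ _⟩, ?_⟩
      intro s hs
      rcases le_or_gt s T with h | h
      · rcases h.lt_or_eq with h' | h'
        · exact (hpre s hs.1 h').2
        · rw [h', hφT]; exact Real.pi_pos
      · apply hball
        rw [Real.dist_eq, abs_of_nonneg (by linarith : (0:ℝ) ≤ s - T)]
        have h2 : s ≤ t' := hs.2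
        have h3 : t' ≤ T + ε / 2 := min_le_right _ _
        linarith
    · -- the trajectory reaches φ = π at time T, then exits right: p ∈ B, contradiction
      have hφT : (F p T).1 = Real.pi := le_antisymm hThi hTπ'
      have hevpos : ∀ᶠ t in 𝓝[>] T, Real.pi < (F p t).1 := by
        rcases lt_trichotomy ((F p T).2) 0 with hy | hy | hy
        · exfalso
          have hl := aux_left_gt (hode1 p T) hy
          obtain ⟨t, ht1, ht2⟩ := (hl.and hmemIoo').exists
          have := (hpre t ht2.1.le ht2.2).2
          rw [hφT] at ht1
          linarith
        · have hpt : F p T = ((Real.pi : ℝ), (0:ℝ)) := Prod.ext hφT hy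
          obtain ⟨w, hw, hsub⟩ := mem_nhdsGT_iff_exists_Ioc_subset.mp exit_right
          have hw' : 0 < w := hw
          apply mem_nhdsGT_iff_exists_Ioc_subset.mpr
          refine ⟨T + w, by simp only [Set.mem_Ioi]; linarith, ?_⟩
          intro t ht
          show Real.pi < (F p t).1
          have h1 := hFadd p T (t - T)
          rw [hpt, show T + (t - T) = t by ring] at h1
          rw [h1]
          exact hsub ⟨sub_pos.mpr ht.1, by linarith [ht.2]⟩
        · have := aux_right_gt (hode1 p T) hy
          filter_upwards [this] with t ht; rwa [hφT] at ht
      obtain ⟨w, hw, hsub⟩ := mem_nhdsGT_iff_exists_Ioc_subset.mp hevpos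
      have hw' : T < w := hw
      have hev : ∀ᶠ s in 𝓝 T, 0 < (F p s).1 := by
        apply hφc.continuousAt.eventually_const_lt
        show 0 < (F p T).1
        rw [hφT]; exact Real.pi_pos
      obtain ⟨ε, hε, hball⟩ := Metric.eventually_nhds_iff.mp hev
      set t' := min w (T + ε / 2) with ht'_def
      have hTt' : T < t' := lt_min hw' (by linarith)
      apply hx₀B
      refine ⟨t', by linarith, hsub ⟨hTt', min_le_left _ _⟩, ?_⟩
      intro s hs
      rcases le_or_gt s T with h | h
      · rcases h.lt_or_eq with h' | h'
        · exact (hpre s hs.1 h').1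
        · rw [h', hφT]; exact Real.pi_pos
      · apply hball
        rw [Real.dist_eq, abs_of_nonneg (by linarith : (0:ℝ) ≤ s - T)]
        have h2 : s ≤ t' := hs.2
        have h3 : t' ≤ T + ε / 2 := min_le_right _ _
        linarith
  refine ⟨p, hstay, ?_⟩
  intro htend
  -- Lyapunov stability with the ball of radius 1 around (π/2, 0)
  set c : ℝ × ℝ := (Real.pi / 2, (0:ℝ)) with hc_def
  obtain ⟨V, hVopen, hcV, hVstab⟩ := hstab (Metric.ball c 1) Metric.isOpen_ball
    (Metric.mem_ball_self one_pos)
  obtain ⟨δ, hδ, hδball⟩ := Metric.isOpen_iff.mp hVopen c hcV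
  have hev : ∀ᶠ t in Filter.atTop, F p t ∈ Metric.ball c δ :=
    htend (Metric.ball_mem_nhds c hδ)
  obtain ⟨T₀, hT₀⟩ := Filter.eventually_atTop.mp hev
  set T := max T₀ 0 with hT_def
  have hT0 : (0:ℝ) ≤ T := le_max_right _ _
  have hpT : F p T ∈ Metric.ball c δ := hT₀ T (le_max_left _ _)
  -- the tube lemma along [0, T]
  have hWopen : IsOpen {qt : (ℝ × ℝ) × ℝ | 0 < (F qt.1 qt.2).1 ∧ (F qt.1 qt.2).1 < Real.pi} :=
    (hWgt 0).inter (hWlt Real.pi)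
  obtain ⟨N₁, hN₁o, hpN₁, hN₁⟩ := tube_helper hWopen p
    (fun s hs => hstay s hs.1)
  have hN₂o : IsOpen ((fun q : ℝ × ℝ => F q T) ⁻¹' Metric.ball c δ) :=
    Metric.isOpen_ball.preimage (hcont1 T)
  obtain ⟨x, hxE, hxN⟩ := hclose (N₁ ∩ (fun q : ℝ × ℝ => F q T) ⁻¹' Metric.ball c δ)
    (hN₁o.inter hN₂o) ⟨hpN₁, hpT⟩
  obtain ⟨t, ht0, htneg, -⟩ := hxE.2
  rcases le_or_gt t T with h | h
  · have := (hN₁ _ hxN.1 t ⟨ht0, h⟩).1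
    linarith
  · have hqV : F (x, (0:ℝ)) T ∈ V := hδball hxN.2
    have hmem := hVstab _ hqV (t - T) (by linarith)
    have heq : F (x, (0:ℝ)) t = F (F (x, (0:ℝ)) T) (t - T) := by
      have h1 := hFadd (x, (0:ℝ)) T (t - T)
      rwa [show T + (t - T) = t by ring] at h1
    rw [← heq] at hmem
    have hd1 : dist (F (x, (0:ℝ)) t).1 c.1 ≤ dist (F (x, (0:ℝ)) t) c := by
      rw [Prod.dist_eq]; exact le_max_left _ _
    have hd2 : dist (F (x, (0:ℝ)) t) c < 1 := Metric.mem_ball.mp hmem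
    have hd3 : |(F (x, (0:ℝ)) t).1 - Real.pi / 2| < 1 := by
      have : c.1 = Real.pi / 2 := rfl
      rw [← this, ← Real.dist_eq]
      exact lt_of_le_of_lt hd1 hd2
    have := abs_lt.mp hd3
    linarith
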